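/- Fix ρ > 0 and reals 0 < s ≤ t. Then ρ^{−2θ} · ∫_0^{ρs} ∫_ℝ exp(−(ρt+ρs−2r)|ξ|^α) |ξ|^{1−2H} dξ dr = ∫_0^s ∫_ℝ exp(−(t+s−2r)|ξ|^α) |ξ|^{1−2H} dξ dr, and these Lebesgue integrals are finite. (This is the covariance identity showing that the temporal covariance E[u(ρt,x)u(ρs,x)] of the solution of the stochastic fractional heat equation scales as ρ^{2θ}, i.e. the solution process in time is self-similar of index θ.) -/

import Mathlib

open MeasureTheory Real Set

private lemma shf_inner_integrable {a q b : ℝ} (ha : 1 ≤ a) (hq : -1 < q) (hb : 0 < b) :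
    Integrable (fun ξ : ℝ => Real.exp (-b * |ξ| ^ a) * |ξ| ^ q) := by
  have hI : IntegrableOn (fun x : ℝ => x ^ q * Real.exp (-b * x ^ a)) (Ioi 0) :=
    integrableOn_rpow_mul_exp_neg_mul_rpow hq (by linarith) hb
  have hIabs : IntegrableOn (fun x : ℝ => Real.exp (-b * |x| ^ a) * |x| ^ q) (Ioi 0) := by
    refine hI.congr_fun (fun x hx => ?_) measurableSet_Ioi
    rw [abs_of_pos hx, mul_comm]
  rw [← integrableOn_univ, ← Iic_union_Ioi (a := (0 : ℝ)), integrableOn_union]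
  refine ⟨?_, hIabs⟩
  rw [← Measure.map_neg_eq_self (volume : Measure ℝ)]
  have m : MeasurableEmbedding fun x : ℝ => -x := (Homeomorph.neg ℝ).measurableEmbedding
  rw [m.integrableOn_map_iff]
  simp_rw [Function.comp_def, abs_neg, neg_preimage, neg_Iic, neg_zero]
  exact (integrableOn_Ici_iff_integrableOn_Ioi).mpr hIabs

private lemma shf_inner_eq {a q b : ℝ} (ha : 0 < a) (hq : -1 < q) (hb : 0 < b) :
    ∫ ξ : ℝ, Real.exp (-b * |ξ| ^ a) * |ξ| ^ q
      = b ^ (-((q + 1) / a)) * (2 * (1 / a) * Real.Gamma ((q + 1) / a)) := by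
  have key := integral_comp_abs (f := fun x : ℝ => x ^ q * Real.exp (-b * x ^ a))
  rw [integral_rpow_mul_exp_neg_mul_rpow ha hq hb] at key
  have h1 : ∫ ξ : ℝ, Real.exp (-b * |ξ| ^ a) * |ξ| ^ q
      = ∫ ξ : ℝ, |ξ| ^ q * Real.exp (-b * |ξ| ^ a) :=
    integral_congr_ae (Filter.Eventually.of_forall fun ξ => mul_comm _ _)
  rw [h1]
  rw [key, ← neg_div]
  ring

private lemma shf_outer_integrable {k s T : ℝ} (hk : -1 < -k) (hs : 0 ≤ s) :
    IntegrableOn (fun r : ℝ => (T - 2 * r) ^ (-k)) (Ioc 0 s) := by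
  have h1 : IntervalIntegrable (fun x : ℝ => x ^ (-k)) volume (T - 2 * s) T :=
    intervalIntegral.intervalIntegrable_rpow' hk
  have h2 := (h1.comp_sub_left T).comp_mul_left (c := 2)
  have e1 : (T - (T - 2 * s)) / 2 = s := by ring
  have e2 : (T - T) / 2 = 0 := by ring
  rw [e1, e2] at h2
  exact (intervalIntegrable_iff_integrableOn_Ioc_of_le hs).1 h2.symm

private lemma shf_outer_eq (a q : ℝ) (ha : 1 < a) (hq : -1 < q) (s T : ℝ)
    (hs : 0 < s) (hT : 2 * s ≤ T) :
    ∫ r in Ioc 0 s, ∫ ξ : ℝ, Real.exp (-(T - 2 * r) * |ξ| ^ a) * |ξ| ^ q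
      = (∫ r in Ioc 0 s, (T - 2 * r) ^ (-((q + 1) / a)))
          * (2 * (1 / a) * Real.Gamma ((q + 1) / a)) := by
  rw [← integral_mul_const]
  rw [integral_Ioc_eq_integral_Ioo, integral_Ioc_eq_integral_Ioo]
  refine setIntegral_congr_fun measurableSet_Ioo (fun r hr => ?_)
  have hb : 0 < T - 2 * r := by
    have := hr.2; linarith
  exact shf_inner_eq (by linarith) hq hb

private lemma shf_prod_integrable (a q : ℝ) (ha : 1 < a) (hq : -1 < q) (s T : ℝ)
    (hs : 0 < s) (hT : 2 * s ≤ T) (hk1 : (q + 1) / a < 1) :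
    IntegrableOn (fun p : ℝ × ℝ => Real.exp (-(T - 2 * p.1) * |p.2| ^ a) * |p.2| ^ q)
      (Ioc 0 s ×ˢ (univ : Set ℝ)) := by
  have hmeq : (volume : Measure (ℝ × ℝ)).restrict (Ioc 0 s ×ˢ (univ : Set ℝ))
      = (volume.restrict (Ioc 0 s)).prod volume := by
    rw [Measure.volume_eq_prod, ← Measure.prod_restrict, Measure.restrict_univ]
  rw [IntegrableOn, hmeq]
  have hmeas : AEStronglyMeasurable
      (fun p : ℝ × ℝ => Real.exp (-(T - 2 * p.1) * |p.2| ^ a) * |p.2| ^ q)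
      ((volume.restrict (Ioc 0 s)).prod volume) := by
    apply Measurable.aestronglyMeasurable
    measurability
  rw [integrable_prod_iff hmeas]
  have h1 : ∀ᵐ r ∂volume.restrict (Ioc 0 s), r ∈ Ioc 0 s :=
    ae_restrict_mem measurableSet_Ioc
  have h2 : ∀ᵐ r ∂volume.restrict (Ioc 0 s), r ≠ s := by
    refine ae_restrict_of_ae ?_
    refine ae_iff.2 ?_
    simpa using measure_singleton (s : ℝ)
  constructor
  · filter_upwards [h1, h2] with r hr hrs
    have hb : 0 < T - 2 * r := by
      have : r < s := lt_of_le_of_ne hr.2 hrs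
      linarith
    exact shf_inner_integrable ha.le hq hb
  · have hout : Integrable
        (fun r : ℝ => (T - 2 * r) ^ (-((q + 1) / a))
          * (2 * (1 / a) * Real.Gamma ((q + 1) / a))) (volume.restrict (Ioc 0 s)) :=
      (shf_outer_integrable (by linarith) hs.le).mul_const _
    refine hout.congr ?_
    filter_upwards [h1, h2] with r hr hrs
    have hb : 0 < T - 2 * r := by
      have : r < s := lt_of_le_of_ne hr.2 hrs
      linarith
    have h3 : ∫ ξ : ℝ, ‖Real.exp (-(T - 2 * r) * |ξ| ^ a) * |ξ| ^ q‖
        = ∫ ξ : ℝ, Real.exp (-(T - 2 * r) * |ξ| ^ a) * |ξ| ^ q :=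
      integral_congr_ae (Filter.Eventually.of_forall fun ξ =>
        norm_of_nonneg (by positivity))
    rw [h3, shf_inner_eq (by linarith) hq hb]

private lemma shf_scale (k ρ s T : ℝ) (hρ : 0 < ρ) (hs : 0 < s) (hT : 2 * s ≤ T) :
    ∫ r in Ioc 0 (ρ * s), (ρ * T - 2 * r) ^ (-k)
      = ρ ^ (1 - k) * ∫ r in Ioc 0 s, (T - 2 * r) ^ (-k) := by
  have h0 : (0 : ℝ) ≤ ρ * s := by positivity
  rw [← intervalIntegral.integral_of_le h0, ← intervalIntegral.integral_of_le hs.le]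
  have key := intervalIntegral.smul_integral_comp_mul_left (a := (0 : ℝ)) (b := s)
    (f := fun r : ℝ => (ρ * T - 2 * r) ^ (-k)) ρ
  rw [mul_zero] at key
  rw [← key]
  have hcong : ∫ x in (0 : ℝ)..s, (ρ * T - 2 * (ρ * x)) ^ (-k)
      = ∫ x in (0 : ℝ)..s, ρ ^ (-k) * (T - 2 * x) ^ (-k) := by
    refine intervalIntegral.integral_congr (fun x hx => ?_)
    rw [uIcc_of_le hs.le] at hx
    have hx1 : 0 ≤ T - 2 * x := by have := hx.2; linarith
    have he : ρ * T - 2 * (ρ * x) = ρ * (T - 2 * x) := by ring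
    rw [he, Real.mul_rpow hρ.le hx1]
  rw [hcong, intervalIntegral.integral_const_mul, smul_eq_mul, ← mul_assoc]
  congr 1
  rw [show (1 : ℝ) - k = 1 + -k by ring, Real.rpow_add hρ, Real.rpow_one]

/-- Self-similarity covariance identity: for `α ∈ (1,2]`, `H ∈ ((2-α)/2, 1)`,
`θ = 1/2 - (1-H)/α`, `ρ > 0` and `0 < s ≤ t`, the rescaled covariance integral of the
solution of the stochastic fractional heat equation at scale `ρ` equals the covariance
integral at scale `1`, and the integrals are finite. -/
theorem stmt_0 (α H θ : ℝ) (hα₁ : 1 < α) (hα₂ : α ≤ 2)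
    (hH₁ : (2 - α) / 2 < H) (hH₂ : H < 1)
    (hθ : θ = 1 / 2 - (1 - H) / α)
    (ρ : ℝ) (hρ : 0 < ρ) (s t : ℝ) (hs : 0 < s) (hst : s ≤ t) :
    IntegrableOn
      (fun p : ℝ × ℝ =>
        Real.exp (-(ρ * t + ρ * s - 2 * p.1) * |p.2| ^ α) * |p.2| ^ (1 - 2 * H))
      (Set.Ioc 0 (ρ * s) ×ˢ Set.univ) ∧
    IntegrableOn
      (fun p : ℝ × ℝ =>
        Real.exp (-(t + s - 2 * p.1) * |p.2| ^ α) * |p.2| ^ (1 - 2 * H))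
      (Set.Ioc 0 s ×ˢ Set.univ) ∧
    ρ ^ (-(2 * θ)) *
        ∫ r in Set.Ioc 0 (ρ * s), ∫ ξ : ℝ,
          Real.exp (-(ρ * t + ρ * s - 2 * r) * |ξ| ^ α) * |ξ| ^ (1 - 2 * H)
      = ∫ r in Set.Ioc 0 s, ∫ ξ : ℝ,
          Real.exp (-(t + s - 2 * r) * |ξ| ^ α) * |ξ| ^ (1 - 2 * H) := by
  have hα0 : (0 : ℝ) < α := by linarith
  have hq : -1 < 1 - 2 * H := by linarith
  have hk1 : (1 - 2 * H + 1) / α < 1 := by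
    rw [div_lt_one hα0]; linarith
  have hT1 : 2 * s ≤ t + s := by linarith
  have hT2 : 2 * (ρ * s) ≤ ρ * t + ρ * s := by nlinarith
  have hρs : 0 < ρ * s := by positivity
  refine ⟨shf_prod_integrable α (1 - 2 * H) hα₁ hq (ρ * s) (ρ * t + ρ * s) hρs hT2 hk1,
    shf_prod_integrable α (1 - 2 * H) hα₁ hq s (t + s) hs hT1 hk1, ?_⟩
  rw [shf_outer_eq α (1 - 2 * H) hα₁ hq (ρ * s) (ρ * t + ρ * s) hρs hT2,
    shf_outer_eq α (1 - 2 * H) hα₁ hq s (t + s) hs hT1]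
  rw [show ρ * t + ρ * s = ρ * (t + s) by ring]
  rw [shf_scale ((1 - 2 * H + 1) / α) ρ s (t + s) hρ hs hT1]
  have hexp : ρ ^ (-(2 * θ)) * ρ ^ (1 - (1 - 2 * H + 1) / α) = 1 := by
    rw [← Real.rpow_add hρ,
      show -(2 * θ) + (1 - (1 - 2 * H + 1) / α) = 0 by
        rw [hθ]; field_simp; ring,
      Real.rpow_zero]
  set X := ∫ r in Set.Ioc 0 s, (t + s - 2 * r) ^ (-((1 - 2 * H + 1) / α)) with hX
  set C := 2 * (1 / α) * Real.Gamma ((1 - 2 * H + 1) / α) with hC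
  calc ρ ^ (-(2 * θ)) * (ρ ^ (1 - (1 - 2 * H + 1) / α) * X * C)
      = ρ ^ (-(2 * θ)) * ρ ^ (1 - (1 - 2 * H + 1) / α) * (X * C) := by ring
    _ = X * C := by rw [hexp, one_mul]
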